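/- Let H be a Hilbert space, let P₁,…,P_k be orthogonal projections on H, and set A_k = P₁P₂⋯P_{k-1}P_kP_{k-1}⋯P₂P₁. Then the fixed-point space ker(A_k − 1) equals the intersection P₁H ∩ P₂H ∩ ⋯ ∩ P_kH. -/

import Mathlib

open ContinuousLinearMap

section aux

variable {H : Type*} [NormedAddCommGroup H] [InnerProductSpace ℂ H] [CompleteSpace H]

private lemma proj_pyth (Q : H →L[ℂ] H) (hQ : Q * Q = Q) (hsa : IsSelfAdjoint Q) (x : H) :
    ‖x‖ * ‖x‖ = ‖Q x‖ * ‖Q x‖ + ‖x - Q x‖ * ‖x - Q x‖ := by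
  have hadj : adjoint Q = Q := (isSelfAdjoint_iff' ).mp hsa
  have hQQ : Q (Q x) = Q x := by
    conv_rhs => rw [← hQ]
    rfl
  have horth : (inner ℂ (Q x) (x - Q x) : ℂ) = 0 := by
    calc (inner ℂ (Q x) (x - Q x) : ℂ) = inner ℂ ((adjoint Q) x) (x - Q x) := by rw [hadj]
      _ = inner ℂ x (Q (x - Q x)) := adjoint_inner_left Q (x - Q x) x
      _ = 0 := by rw [map_sub, hQQ, sub_self, inner_zero_right]
  have := norm_add_sq_eq_norm_sq_add_norm_sq_of_inner_eq_zero (Q x) (x - Q x) horth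
  rwa [add_sub_cancel] at this

private lemma proj_contraction (Q : H →L[ℂ] H) (hQ : Q * Q = Q) (hsa : IsSelfAdjoint Q)
    (x : H) : ‖Q x‖ ≤ ‖x‖ := by
  have h := proj_pyth Q hQ hsa x
  nlinarith [norm_nonneg (x - Q x), norm_nonneg (Q x), norm_nonneg x]

private lemma proj_fix_of_norm (Q : H →L[ℂ] H) (hQ : Q * Q = Q) (hsa : IsSelfAdjoint Q)
    (x : H) (h : ‖Q x‖ = ‖x‖) : Q x = x := by
  have h2 := proj_pyth Q hQ hsa x
  rw [h] at h2
  have : ‖x - Q x‖ = 0 := by nlinarith [norm_nonneg (x - Q x)]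
  have := norm_eq_zero.mp this
  linear_combination (norm := abel1) -this

private lemma prod_contraction (l : List (H →L[ℂ] H))
    (h : ∀ Q ∈ l, Q * Q = Q ∧ IsSelfAdjoint Q) (x : H) : ‖l.prod x‖ ≤ ‖x‖ := by
  induction l with
  | nil => simp
  | cons a t ih =>
      have ha := h a (List.mem_cons_self)
      have : (a :: t).prod x = a (t.prod x) := by simp [List.prod_cons, mul_apply]
      rw [this]
      exact le_trans (proj_contraction a ha.1 ha.2 (t.prod x))
        (ih (fun Q hQ => h Q (List.mem_cons_of_mem a hQ)))

private lemma prod_fix_of_norm (l : List (H →L[ℂ] H))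
    (h : ∀ Q ∈ l, Q * Q = Q ∧ IsSelfAdjoint Q) (x : H) (hx : ‖l.prod x‖ = ‖x‖) :
    ∀ Q ∈ l, Q x = x := by
  induction l using List.reverseRecOn with
  | nil => intro Q hQ; simp at hQ
  | append_singleton t a ih =>
      have ha := h a (by simp)
      have hprod : (t ++ [a]).prod x = t.prod (a x) := by
        simp [List.prod_append, mul_apply]
      rw [hprod] at hx
      have ht : ∀ Q ∈ t, Q * Q = Q ∧ IsSelfAdjoint Q :=
        fun Q hQ => h Q (by simp [hQ])
      have h1 : ‖t.prod (a x)‖ ≤ ‖a x‖ := prod_contraction t ht (a x)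
      have h2 : ‖a x‖ ≤ ‖x‖ := proj_contraction a ha.1 ha.2 x
      have hax : a x = x := proj_fix_of_norm a ha.1 ha.2 x (le_antisymm h2 (hx ▸ h1))
      rw [hax] at hx
      intro Q hQ
      rcases List.mem_append.mp hQ with h' | h'
      · exact ih ht hx Q h'
      · simp at h'; rw [h']; exact hax

omit [CompleteSpace H] in
private lemma prod_fix_of_fix (l : List (H →L[ℂ] H)) (x : H)
    (h : ∀ Q ∈ l, Q x = x) : l.prod x = x := by
  induction l with
  | nil => simp
  | cons a t ih =>
      have : (a :: t).prod x = a (t.prod x) := by simp [List.prod_cons, mul_apply]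
      rw [this, ih (fun Q hQ => h Q (List.mem_cons_of_mem a hQ)),
        h a (List.mem_cons_self)]

private lemma adj_prod (l : List (H →L[ℂ] H)) (h : ∀ Q ∈ l, IsSelfAdjoint Q) :
    adjoint l.prod = l.reverse.prod := by
  induction l with
  | nil => simp [← star_eq_adjoint]
  | cons a t ih =>
      rw [List.prod_cons, ← star_eq_adjoint, star_mul, star_eq_adjoint, star_eq_adjoint,
        ih (fun Q hQ => h Q (List.mem_cons_of_mem a hQ)),
        (isSelfAdjoint_iff').mp (h a (List.mem_cons_self)), List.reverse_cons,
        List.prod_append, List.prod_singleton]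

end aux

/-- For orthogonal projections `P 0, …, P (k-1)` and the symmetric product
`A = P 0 ⋯ P (k-1) ⋯ P 0`, the fixed point set of `A` is the intersection of the
ranges of the `P i`. -/
theorem stmt2 {H : Type*} [NormedAddCommGroup H] [InnerProductSpace ℂ H] [CompleteSpace H]
    (k : ℕ) (P : Fin k → H →L[ℂ] H)
    (hidem : ∀ i, P i * P i = P i) (hsa : ∀ i, IsSelfAdjoint (P i)) :
    {x : H | ((List.ofFn P).prod * ((List.ofFn P).dropLast.reverse).prod) x = x}
      = ⋂ i, Set.range (P i) := by
  match k with
  | 0 => simp [Set.eq_univ_iff_forall]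
  | n + 1 =>
    set l : List (H →L[ℂ] H) := List.ofFn P with hl
    have hmem : ∀ Q ∈ l, Q * Q = Q ∧ IsSelfAdjoint Q := by
      intro Q hQ
      obtain ⟨i, rfl⟩ := List.mem_ofFn.mp hQ
      exact ⟨hidem i, hsa i⟩
    have hne : l ≠ [] := by simp [hl]
    obtain ⟨t, Q, htQ⟩ : ∃ t a, l = t ++ [a] := ⟨l.dropLast, l.getLast hne,
      (List.dropLast_append_getLast hne).symm⟩
    have hQmem : Q * Q = Q ∧ IsSelfAdjoint Q := hmem Q (by simp [htQ])
    have hdrop : l.dropLast = t := by simp [htQ]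
    have hrev : l.reverse = Q :: t.reverse := by simp [htQ]
    -- A = adjoint C * C where C = l.reverse.prod
    have hadjC : adjoint l.reverse.prod = l.prod := by
      rw [adj_prod l.reverse (fun R hR => (hmem R (List.mem_reverse.mp hR)).2),
        List.reverse_reverse]
    have hA : l.prod * (l.dropLast.reverse).prod = adjoint l.reverse.prod * l.reverse.prod := by
      rw [hadjC, hdrop, hrev, List.prod_cons, ← mul_assoc]
      congr 1
      rw [htQ, List.prod_append, List.prod_singleton, mul_assoc, hQmem.1]
    ext x
    simp only [Set.mem_setOf_eq, Set.mem_iInter]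
    constructor
    · intro hx
      rw [hA] at hx
      have hnorm : (inner ℂ (l.reverse.prod x) (l.reverse.prod x) : ℂ) = inner ℂ x x := by
        rw [← adjoint_inner_right, ← ContinuousLinearMap.mul_apply, hx]
      have hnn : ‖l.reverse.prod x‖ = ‖x‖ := by
        have hsq : ‖l.reverse.prod x‖ ^ 2 = ‖x‖ ^ 2 := by
          rw [← inner_self_eq_norm_sq (𝕜 := ℂ) (l.reverse.prod x),
            ← inner_self_eq_norm_sq (𝕜 := ℂ) x, hnorm]
        have := congrArg Real.sqrt hsq
        rwa [Real.sqrt_sq (norm_nonneg _), Real.sqrt_sq (norm_nonneg _)] at this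
      have hfix := prod_fix_of_norm l.reverse
        (fun R hR => hmem R (List.mem_reverse.mp hR)) x hnn
      intro i
      exact ⟨x, hfix (P i) (List.mem_reverse.mpr (List.mem_ofFn.mpr ⟨i, rfl⟩))⟩
    · intro hx
      have hfix : ∀ R ∈ l, R x = x := by
        intro R hR
        obtain ⟨i, rfl⟩ := List.mem_ofFn.mp hR
        obtain ⟨y, hy⟩ := hx i
        have := congrArg (P i) hy
        rw [← ContinuousLinearMap.mul_apply, hidem i, hy] at this
        exact this.symm
      have h1 : (l.dropLast.reverse).prod x = x :=
        prod_fix_of_fix _ x (fun R hR => hfix R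
          (List.dropLast_sublist l |>.subset (List.mem_reverse.mp hR)))
      rw [ContinuousLinearMap.mul_apply, h1]
      exact prod_fix_of_fix l x hfix
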